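/- Let X be a finite set of distinct points in ℙ¹×ℙ¹ over k containing points P₁×Q₁ and P₂×Q₂ with P₁ ≠ P₂ and Q₁ ≠ Q₂ such that neither P₁×Q₂ nor P₂×Q₁ belongs to X. Suppose moreover that |X_{P₁,1}| > 1 and |X_{Q₁,2}| = 1. Then deg_X(P₁×Q₁) contains at least two elements. -/

import Mathlib

/-- `ℙ¹` over `k`, as the projectivization of `k²`. -/
abbrev Proj1 (k : Type*) [Field k] := Projectivization k (Fin 2 → k)

/-- The bigraded coordinate ring `R = k[x₀,x₁,y₀,y₁]` of `ℙ¹ × ℙ¹`,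
with the `x` variables indexed by `Sum.inl` and the `y` variables by `Sum.inr`. -/
abbrev BiPoly (k : Type*) [Field k] := MvPolynomial (Fin 2 ⊕ Fin 2) k

variable {k : Type*} [Field k]

/-- `F` is bihomogeneous of bidegree `d = (d₁, d₂)`: every monomial of `F` has total degree
`d₁` in `x₀,x₁` and total degree `d₂` in `y₀,y₁`. -/
def IsBihomogeneous (F : BiPoly k) (d : ℕ × ℕ) : Prop :=
  ∀ m ∈ F.support,
    (∑ i : Fin 2, m (Sum.inl i)) = d.1 ∧ (∑ i : Fin 2, m (Sum.inr i)) = d.2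

/-- `F` vanishes at the point `P` of `ℙ¹ × ℙ¹`, i.e. at every pair of representatives. -/
def VanishesAt (F : BiPoly k) (P : Proj1 k × Proj1 k) : Prop :=
  ∀ (p q : Fin 2 → k) (hp : p ≠ 0) (hq : q ≠ 0),
    Projectivization.mk k p hp = P.1 → Projectivization.mk k q hq = P.2 →
    MvPolynomial.eval (Sum.elim p q) F = 0

/-- `F` is a separator of `P` in `X` of bidegree `d`: it is bihomogeneous of bidegree `d`,
does not vanish at `P`, and vanishes at every other point of `X`. -/
def IsSeparator (X : Finset (Proj1 k × Proj1 k)) (P : Proj1 k × Proj1 k)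
    (F : BiPoly k) (d : ℕ × ℕ) : Prop :=
  IsBihomogeneous F d ∧ ¬ VanishesAt F P ∧ ∀ Q ∈ X, Q ≠ P → VanishesAt F Q

/-- The set of bidegrees of separators of `P` in `X`. -/
def sepDegrees (X : Finset (Proj1 k × Proj1 k)) (P : Proj1 k × Proj1 k) : Set (ℕ × ℕ) :=
  {d | ∃ F : BiPoly k, IsSeparator X P F d}

/-- `deg_X(P)`: the set of minimal elements, with respect to the componentwise partial
order on `ℕ × ℕ`, of the set of bidegrees of separators of `P` in `X`. -/
def degSet (X : Finset (Proj1 k × Proj1 k)) (P : Proj1 k × Proj1 k) : Set (ℕ × ℕ) :=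
  {d | d ∈ sepDegrees X P ∧ ∀ e ∈ sepDegrees X P, e ≤ d → e = d}

/-- The ideal `I_X` of all polynomials vanishing at (every representative of)
every point of `X`. -/
noncomputable def vanishingIdeal (X : Finset (Proj1 k × Proj1 k)) : Ideal (BiPoly k) where
  carrier := {F | ∀ P ∈ X, VanishesAt F P}
  zero_mem' := by
    intro P _ p q hp hq _ _
    simp
  add_mem' := by
    intro F G hF hG P hP p q hp hq h1 h2
    have h := hF P hP p q hp hq h1 h2
    have h' := hG P hP p q hp hq h1 h2
    simp [h, h']
  smul_mem' := by
    intro c F hF P hP p q hp hq h1 h2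
    have h := hF P hP p q hp hq h1 h2
    simp [smul_eq_mul, h]

/-- Property (*): whenever `P×Q, P'×Q' ∈ X` with `P ≠ P'` and `Q ≠ Q'`, at least one of
`P×Q'` and `P'×Q` is in `X`. -/
def PropertyStar (X : Finset (Proj1 k × Proj1 k)) : Prop :=
  ∀ P Q P' Q' : Proj1 k, (P, Q) ∈ X → (P', Q') ∈ X → P ≠ P' → Q ≠ Q' →
    (P, Q') ∈ X ∨ (P', Q) ∈ X

/-- The depth of a commutative ring `A` with respect to an ideal `m`: the supremum of the
lengths of regular sequences on `A` consisting of elements of `m`. -/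
noncomputable def depthWrt (A : Type*) [CommRing A] (m : Ideal A) : ℕ :=
  sSup {n | ∃ rs : List A, rs.length = n ∧ (∀ r ∈ rs, r ∈ m) ∧
    RingTheory.Sequence.IsRegular A rs}

/-- The irrelevant maximal ideal `(x₀,x₁,y₀,y₁)` of `R/I_X`. -/
noncomputable def irrelevantIdeal (X : Finset (Proj1 k × Proj1 k)) :
    Ideal (BiPoly k ⧸ vanishingIdeal X) :=
  (Ideal.span (Set.range (MvPolynomial.X : (Fin 2 ⊕ Fin 2) → BiPoly k))).map
    (Ideal.Quotient.mk (vanishingIdeal X))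

/-- `X` is arithmetically Cohen–Macaulay: `depth (R/I_X) = 2`. -/
def IsACM (X : Finset (Proj1 k × Proj1 k)) : Prop :=
  depthWrt (BiPoly k ⧸ vanishingIdeal X) (irrelevantIdeal X) = 2

open Classical in
/-- The number of points of `X` with first coordinate `P` (the cardinality of `X_{P,1}`). -/
noncomputable def fiber1Card (X : Finset (Proj1 k × Proj1 k)) (P : Proj1 k) : ℕ :=
  (X.filter fun T => T.1 = P).card

open Classical in
/-- The number of points of `X` with second coordinate `Q` (the cardinality of `X_{Q,2}`). -/
noncomputable def fiber2Card (X : Finset (Proj1 k × Proj1 k)) (Q : Proj1 k) : ℕ :=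
  (X.filter fun T => T.2 = Q).card

open Classical in
/-- The number of distinct first coordinates of points of `X`, i.e. `|π₁(X)|`. -/
noncomputable def proj1Card (X : Finset (Proj1 k × Proj1 k)) : ℕ :=
  (X.image Prod.fst).card

open Classical in
/-- The number of distinct second coordinates of points of `X`, i.e. `|π₂(X)|`. -/
noncomputable def proj2Card (X : Finset (Proj1 k × Proj1 k)) : ℕ :=
  (X.image Prod.snd).card

open MvPolynomial

noncomputable def linX (v : Fin 2 → k) : BiPoly k :=
  C (v 1) * X (Sum.inl 0) - C (v 0) * X (Sum.inl 1)

noncomputable def linY (v : Fin 2 → k) : BiPoly k :=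
  C (v 1) * X (Sum.inr 0) - C (v 0) * X (Sum.inr 1)

lemma eval_linX (v p q : Fin 2 → k) :
    eval (Sum.elim p q) (linX v) = v 1 * p 0 - v 0 * p 1 := by simp [linX]

lemma eval_linY (v p q : Fin 2 → k) :
    eval (Sum.elim p q) (linY v) = v 1 * q 0 - v 0 * q 1 := by simp [linY]

lemma ne_zero_pair {p : Fin 2 → k} (hp : p ≠ 0) : p 0 ≠ 0 ∨ p 1 ≠ 0 := by
  by_contra h
  push_neg at h
  exact hp (funext fun i => by fin_cases i <;> simp [h.1, h.2])

lemma det_zero_iff {p v : Fin 2 → k} (hp : p ≠ 0) (hv : v ≠ 0) :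
    v 1 * p 0 - v 0 * p 1 = 0 ↔
      Projectivization.mk k p hp = Projectivization.mk k v hv := by
  rw [Projectivization.mk_eq_mk_iff' k p v hp hv]
  constructor
  · intro h
    have h' : v 1 * p 0 = v 0 * p 1 := sub_eq_zero.mp h
    rcases ne_zero_pair hv with h0 | h1
    · refine ⟨p 0 / v 0, funext fun i => ?_⟩
      fin_cases i
      · simp [div_mul_cancel₀, h0]
      · simp only [Pi.smul_apply, smul_eq_mul]
        field_simp
        simp only [Fin.mk_one, Fin.zero_eta, Fin.isValue] at *
        linear_combination h'
    · refine ⟨p 1 / v 1, funext fun i => ?_⟩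
      fin_cases i
      · simp only [Pi.smul_apply, smul_eq_mul]
        field_simp
        simp only [Fin.mk_one, Fin.zero_eta, Fin.isValue] at *
        linear_combination -h'
      · simp [div_mul_cancel₀, h1]
  · rintro ⟨a, rfl⟩
    simp only [Pi.smul_apply, smul_eq_mul]
    ring

lemma IsBihomogeneous.mul {F G : BiPoly k} {d e : ℕ × ℕ}
    (hF : IsBihomogeneous F d) (hG : IsBihomogeneous G e) :
    IsBihomogeneous (F * G) (d + e) := by
  classical
  intro m hm
  have h := MvPolynomial.support_mul F G hm
  rw [Finset.mem_add] at h
  obtain ⟨u, hu, v, hv, rfl⟩ := h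
  obtain ⟨hu1, hu2⟩ := hF u hu
  obtain ⟨hv1, hv2⟩ := hG v hv
  constructor
  · simp only [Finsupp.add_apply, Finset.sum_add_distrib, hu1, hv1, Prod.fst_add]
  · simp only [Finsupp.add_apply, Finset.sum_add_distrib, hu2, hv2, Prod.snd_add]

lemma IsBihomogeneous.one : IsBihomogeneous (1 : BiPoly k) (0, 0) := by
  intro m hm
  have : m = 0 := by
    simpa using MvPolynomial.support_monomial_subset (s := 0) (a := (1:k)) hm
  simp [this]

lemma IsBihomogeneous.prod {ι : Type*} (s : Finset ι) (f : ι → BiPoly k) (d : ι → ℕ × ℕ)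
    (h : ∀ i ∈ s, IsBihomogeneous (f i) (d i)) :
    IsBihomogeneous (∏ i ∈ s, f i) (∑ i ∈ s, d i) := by
  classical
  induction s using Finset.cons_induction with
  | empty => simp only [Finset.prod_empty, Finset.sum_empty]; exact IsBihomogeneous.one
  | cons a s ha ih =>
    rw [Finset.prod_cons, Finset.sum_cons]
    exact (h a (Finset.mem_cons_self a s)).mul
      (ih fun i hi => h i (Finset.mem_cons_of_mem hi))

lemma isBihomogeneous_linY (v : Fin 2 → k) : IsBihomogeneous (linY v) (0, 1) := by
  classical
  intro m hm
  have hsub : (linY v).support ⊆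
      {Finsupp.single (Sum.inr 0 : Fin 2 ⊕ Fin 2) 1, Finsupp.single (Sum.inr 1) 1} := by
    unfold linY
    rw [sub_eq_add_neg]
    refine (MvPolynomial.support_add).trans ?_
    apply Finset.union_subset
    · rw [MvPolynomial.C_mul_X_eq_monomial]
      exact MvPolynomial.support_monomial_subset.trans (by simp)
    · rw [MvPolynomial.support_neg, MvPolynomial.C_mul_X_eq_monomial]
      exact MvPolynomial.support_monomial_subset.trans (by simp)
  have hm' := hsub hm
  simp only [Finset.mem_insert, Finset.mem_singleton] at hm'
  rcases hm' with rfl | rfl <;>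
    simp [Fin.sum_univ_two, Finsupp.single_apply]

lemma isBihomogeneous_linX (v : Fin 2 → k) : IsBihomogeneous (linX v) (1, 0) := by
  classical
  intro m hm
  have hsub : (linX v).support ⊆
      {Finsupp.single (Sum.inl 0 : Fin 2 ⊕ Fin 2) 1, Finsupp.single (Sum.inl 1) 1} := by
    unfold linX
    rw [sub_eq_add_neg]
    refine (MvPolynomial.support_add).trans ?_
    apply Finset.union_subset
    · rw [MvPolynomial.C_mul_X_eq_monomial]
      exact MvPolynomial.support_monomial_subset.trans (by simp)
    · rw [MvPolynomial.support_neg, MvPolynomial.C_mul_X_eq_monomial]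
      exact MvPolynomial.support_monomial_subset.trans (by simp)
  have hm' := hsub hm
  simp only [Finset.mem_insert, Finset.mem_singleton] at hm'
  rcases hm' with rfl | rfl <;>
    simp [Fin.sum_univ_two, Finsupp.single_apply]

lemma eval_elim_smul_right {F : BiPoly k} {d : ℕ × ℕ} (h : IsBihomogeneous F d)
    (p q : Fin 2 → k) (c : k) :
    eval (Sum.elim p (c • q)) F = c ^ d.2 * eval (Sum.elim p q) F := by
  rw [MvPolynomial.eval_eq', MvPolynomial.eval_eq', Finset.mul_sum]
  refine Finset.sum_congr rfl fun m hm => ?_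
  obtain ⟨-, h2⟩ := h m hm
  rw [Fintype.prod_sum_type, Fintype.prod_sum_type]
  simp only [Sum.elim_inl, Sum.elim_inr, Pi.smul_apply, smul_eq_mul, mul_pow]
  rw [Finset.prod_mul_distrib, Finset.prod_pow_eq_pow_sum, h2]
  ring

lemma eval_elim_left_indep {F : BiPoly k} {s : ℕ} (h : IsBihomogeneous F (0, s))
    (p p' q : Fin 2 → k) :
    eval (Sum.elim p q) F = eval (Sum.elim p' q) F := by
  rw [MvPolynomial.eval_eq', MvPolynomial.eval_eq']
  refine Finset.sum_congr rfl fun m hm => ?_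
  obtain ⟨h1, -⟩ := h m hm
  have hz : ∀ i : Fin 2, m (Sum.inl i) = 0 := by
    intro i
    have := Finset.sum_eq_zero_iff.mp h1
    exact this i (Finset.mem_univ i)
  rw [Fintype.prod_sum_type, Fintype.prod_sum_type]
  simp [hz]

lemma card_le_of_binary_form [Infinite k] (T : Finset (Proj1 k)) (Q₁ : Proj1 k) (hQ : Q₁ ∉ T)
    (p₀ : Fin 2 → k) {F : BiPoly k} {s : ℕ} (hF : IsBihomogeneous F (0, s))
    (hvan : ∀ W ∈ T, eval (Sum.elim p₀ W.rep) F = 0)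
    (hnz : eval (Sum.elim p₀ Q₁.rep) F ≠ 0) :
    T.card ≤ s := by
  classical
  obtain ⟨c, hc⟩ := Infinite.exists_notMem_finset
    ((insert Q₁ T).image fun W : Proj1 k => W.rep 1 / W.rep 0)
  have hden : ∀ W ∈ insert Q₁ T, W.rep 1 - c * W.rep 0 ≠ 0 := by
    intro W hW hzero
    rcases eq_or_ne (W.rep 0) 0 with h0 | h0
    · rw [h0, mul_zero, sub_zero] at hzero
      exact W.rep_nonzero (funext fun i => by fin_cases i <;> simp [h0, hzero])
    · apply hc
      refine Finset.mem_image.mpr ⟨W, hW, ?_⟩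
      rw [div_eq_iff h0]
      exact sub_eq_zero.mp hzero
  set xf : Proj1 k → k := fun W => W.rep 0 / (W.rep 1 - c * W.rep 0) with hxf
  set σ : Fin 2 ⊕ Fin 2 → Polynomial k :=
    Sum.elim (fun i => Polynomial.C (p₀ i))
      ![Polynomial.X, Polynomial.C c * Polynomial.X + 1] with hσ
  set g : Polynomial k := MvPolynomial.eval₂ Polynomial.C σ F with hg
  have hcomp : ∀ x : k, g.eval x =
      eval (Sum.elim p₀ ![x, c * x + 1]) F := by
    intro x
    have h1 : g.eval x = Polynomial.evalRingHom x (MvPolynomial.eval₂ Polynomial.C σ F) := rfl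
    rw [h1, MvPolynomial.eval₂_comp_left]
    have h2 : (Polynomial.evalRingHom x).comp Polynomial.C = RingHom.id k := by
      ext a; simp
    rw [h2]
    have h3 : (Polynomial.evalRingHom x) ∘ σ =
        Sum.elim p₀ ![x, c * x + 1] := by
      funext i
      rcases i with i | i
      · simp [hσ]
      · fin_cases i <;> simp [hσ]
    rw [h3]
    rfl
  have hdeg : g.natDegree ≤ s := by
    rw [hg, MvPolynomial.eval₂_eq']
    refine Polynomial.natDegree_sum_le_of_forall_le _ _ fun m hm => ?_
    obtain ⟨-, h2⟩ := hF m hm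
    refine (Polynomial.natDegree_mul_le).trans ?_
    rw [Polynomial.natDegree_C, zero_add]
    refine (Polynomial.natDegree_prod_le _ _).trans ?_
    rw [Fintype.sum_sum_type]
    have hl : (∑ i : Fin 2, ((σ (Sum.inl i)) ^ m (Sum.inl i)).natDegree) = 0 := by
      refine Finset.sum_eq_zero fun i _ => ?_
      simp [hσ]
    have hr : ∀ i : Fin 2, ((σ (Sum.inr i)) ^ m (Sum.inr i)).natDegree ≤ m (Sum.inr i) := by
      intro i
      refine (Polynomial.natDegree_pow_le).trans ?_
      have h1 : (σ (Sum.inr i)).natDegree ≤ 1 := by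
        fin_cases i
        · simp [hσ]
        · simp only [hσ, Sum.elim_inr]
          refine (Polynomial.natDegree_add_le _ _).trans ?_
          simp only [Polynomial.natDegree_one, max_le_iff]
          exact ⟨(Polynomial.natDegree_C_mul_le _ _).trans (by simp), Nat.zero_le _⟩
      calc m (Sum.inr i) * (σ (Sum.inr i)).natDegree ≤ m (Sum.inr i) * 1 :=
            Nat.mul_le_mul_left _ h1
        _ = m (Sum.inr i) := mul_one _
    calc (∑ i : Fin 2, ((σ (Sum.inl i)) ^ m (Sum.inl i)).natDegree)
          + ∑ i : Fin 2, ((σ (Sum.inr i)) ^ m (Sum.inr i)).natDegree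
        ≤ 0 + ∑ i : Fin 2, m (Sum.inr i) := by
          refine Nat.add_le_add hl.le (Finset.sum_le_sum fun i _ => hr i)
      _ = s := by rw [zero_add, h2]
  have hvec : ∀ W ∈ insert Q₁ T,
      (![xf W, c * xf W + 1] : Fin 2 → k)
        = (W.rep 1 - c * W.rep 0)⁻¹ • W.rep := by
    intro W hW
    have hd := hden W hW
    have e0 : xf W = (W.rep 1 - c * W.rep 0)⁻¹ * W.rep 0 := by
      simp only [hxf]
      rw [div_eq_inv_mul]
    have e1 : c * xf W + 1 = (W.rep 1 - c * W.rep 0)⁻¹ * W.rep 1 := by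
      simp only [hxf]
      field_simp
      ring
    funext i
    fin_cases i
    · exact e0
    · exact e1
  have hgval : ∀ W ∈ insert Q₁ T,
      g.eval (xf W) = ((W.rep 1 - c * W.rep 0)⁻¹) ^ s * eval (Sum.elim p₀ W.rep) F := by
    intro W hW
    rw [hcomp, hvec W hW]
    exact eval_elim_smul_right hF p₀ W.rep _
  have hgne : g ≠ 0 := by
    intro h0
    apply hnz
    have := hgval Q₁ (Finset.mem_insert_self _ _)
    rw [h0] at this
    simp only [Polynomial.eval_zero] at this
    have hd := hden Q₁ (Finset.mem_insert_self _ _)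
    have hp : ((Q₁.rep 1 - c * Q₁.rep 0)⁻¹) ^ s ≠ 0 := pow_ne_zero _ (inv_ne_zero hd)
    exact (mul_eq_zero.mp this.symm).resolve_left hp
  have hinj : Set.InjOn xf T := by
    intro W hW W' hW' hx
    have h1 := hvec W (Finset.mem_insert_of_mem hW)
    have h2 := hvec W' (Finset.mem_insert_of_mem hW')
    rw [hx] at h1
    have heq : (W.rep 1 - c * W.rep 0)⁻¹ • W.rep
        = (W'.rep 1 - c * W'.rep 0)⁻¹ • W'.rep := by rw [← h1, ← h2]
    have hdW := hden W (Finset.mem_insert_of_mem hW)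
    have hdW' := hden W' (Finset.mem_insert_of_mem hW')
    have hmk : Projectivization.mk k W.rep W.rep_nonzero
        = Projectivization.mk k W'.rep W'.rep_nonzero := by
      rw [Projectivization.mk_eq_mk_iff']
      refine ⟨(W.rep 1 - c * W.rep 0) * (W'.rep 1 - c * W'.rep 0)⁻¹, ?_⟩
      have := congrArg (fun v => (W.rep 1 - c * W.rep 0) • v) heq
      simpa [smul_smul, mul_inv_cancel₀ hdW] using this.symm
    rw [Projectivization.mk_rep, Projectivization.mk_rep] at hmk
    exact hmk
  have hsub : T.image xf ⊆ g.roots.toFinset := by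
    intro x hx
    obtain ⟨W, hW, rfl⟩ := Finset.mem_image.mp hx
    rw [Multiset.mem_toFinset, Polynomial.mem_roots hgne]
    show g.eval (xf W) = 0
    rw [hgval W (Finset.mem_insert_of_mem hW), hvan W hW, mul_zero]
  calc T.card = (T.image xf).card := (Finset.card_image_of_injOn hinj).symm
    _ ≤ g.roots.toFinset.card := Finset.card_le_card hsub
    _ ≤ Multiset.card g.roots := Multiset.toFinset_card_le _
    _ ≤ g.natDegree := Polynomial.card_roots' g
    _ ≤ s := hdeg

lemma exists_minimal_le (S : Set (ℕ × ℕ)) (d : ℕ × ℕ) (hd : d ∈ S) :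
    ∃ e ∈ S, e ≤ d ∧ ∀ f ∈ S, f ≤ e → f = e := by
  classical
  obtain ⟨n, hn⟩ : ∃ n, d.1 + d.2 = n := ⟨_, rfl⟩
  induction n using Nat.strong_induction_on generalizing d with
  | _ n ih =>
    by_cases h : ∀ f ∈ S, f ≤ d → f = d
    · exact ⟨d, hd, le_refl d, h⟩
    · push_neg at h
      obtain ⟨f, hfS, hfd, hfne⟩ := h
      have h1 : f.1 ≤ d.1 := hfd.1
      have h2 : f.2 ≤ d.2 := hfd.2
      have hne : f.1 ≠ d.1 ∨ f.2 ≠ d.2 := by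
        by_contra hc
        push_neg at hc
        exact hfne (Prod.ext hc.1 hc.2)
      have hlt : f.1 + f.2 < n := by
        rcases hne with h' | h' <;> omega
      obtain ⟨e, heS, hed, hemin⟩ := ih _ hlt f hfS rfl
      exact ⟨e, heS, hed.trans hfd, hemin⟩


/-- Case 2: if `X` fails property (*) at `P₁×Q₁`, `P₂×Q₂` and moreover
`|X_{P₁,1}| > 1` and `|X_{Q₁,2}| = 1`, then `deg_X(P₁×Q₁)` has at least two elements. -/
theorem degree_nontrivial_of_not_star_case_two [IsAlgClosed k] [CharZero k]
    (X : Finset (Proj1 k × Proj1 k)) (P₁ Q₁ P₂ Q₂ : Proj1 k)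
    (h₁ : (P₁, Q₁) ∈ X) (h₂ : (P₂, Q₂) ∈ X) (hP : P₁ ≠ P₂) (hQ : Q₁ ≠ Q₂)
    (h₁₂ : (P₁, Q₂) ∉ X) (h₂₁ : (P₂, Q₁) ∉ X)
    (hb : 1 < fiber1Card X P₁) (ha : fiber2Card X Q₁ = 1) :
    (degSet X (P₁, Q₁)).Nontrivial := by
  classical
  simp only [fiber2Card] at ha
  have hfib : ∀ R ∈ X, R ≠ (P₁, Q₁) → R.2 ≠ Q₁ := by
    intro R hR hne h2
    have hone := Finset.card_le_one.mp ha.le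
    exact hne (hone R (Finset.mem_filter.mpr ⟨hR, h2⟩) (P₁, Q₁)
      (Finset.mem_filter.mpr ⟨h₁, rfl⟩))
  set T : Finset (Proj1 k) := (X.image Prod.snd).erase Q₁ with hT
  have hQ₁T : Q₁ ∉ T := Finset.notMem_erase _ _
  have hQ₂T : Q₂ ∈ T :=
    Finset.mem_erase.mpr ⟨hQ.symm, Finset.mem_image.mpr ⟨(P₂, Q₂), h₂, rfl⟩⟩
  have hmemT : ∀ R ∈ X, R ≠ (P₁, Q₁) → R.2 ∈ T := fun R hR hne =>
    Finset.mem_erase.mpr ⟨hfib R hR hne, Finset.mem_image.mpr ⟨R, hR, rfl⟩⟩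
  have hG : ((0 : ℕ), T.card) ∈ sepDegrees X (P₁, Q₁) := by
    refine ⟨∏ W ∈ T, linY W.rep, ?_, ?_, ?_⟩
    · have h := IsBihomogeneous.prod T (fun W => linY W.rep) (fun _ => (0, 1))
        (fun W _ => isBihomogeneous_linY W.rep)
      rwa [Finset.sum_const, Prod.smul_mk, smul_eq_mul, smul_eq_mul,
        mul_zero, mul_one] at h
    · intro hvan
      have h0 := hvan P₁.rep Q₁.rep P₁.rep_nonzero Q₁.rep_nonzero P₁.mk_rep Q₁.mk_rep
      rw [map_prod] at h0
      obtain ⟨W, hWT, hW0⟩ := Finset.prod_eq_zero_iff.mp h0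
      rw [eval_linY, det_zero_iff Q₁.rep_nonzero W.rep_nonzero,
        Projectivization.mk_rep, Projectivization.mk_rep] at hW0
      exact hQ₁T (hW0 ▸ hWT)
    · intro R hR hne p q hp hq hmk1 hmk2
      rw [map_prod]
      refine Finset.prod_eq_zero (hmemT R hR hne) ?_
      rw [eval_linY, det_zero_iff hq R.2.rep_nonzero, Projectivization.mk_rep]
      exact hmk2
  set Sf : Finset (Proj1 k) := (X.filter fun R => R.2 = Q₂).image Prod.fst with hSf
  set T' : Finset (Proj1 k) := T.erase Q₂ with hT'
  have hSfP₁ : ∀ P' ∈ Sf, P' ≠ P₁ := by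
    intro P' hP' hPe
    obtain ⟨R, hRf, hR1⟩ := Finset.mem_image.mp hP'
    obtain ⟨hRX, hR2⟩ := Finset.mem_filter.mp hRf
    apply h₁₂
    have hReq : R = (P₁, Q₂) := Prod.ext (by rw [hR1, hPe]) hR2
    rwa [hReq] at hRX
  have hF : ((Sf.card : ℕ), T'.card) ∈ sepDegrees X (P₁, Q₁) := by
    refine ⟨(∏ P' ∈ Sf, linX P'.rep) * ∏ W ∈ T', linY W.rep, ?_, ?_, ?_⟩
    · have hx := IsBihomogeneous.prod Sf (fun P' => linX P'.rep) (fun _ => (1, 0))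
        (fun _ _ => isBihomogeneous_linX _)
      have hy := IsBihomogeneous.prod T' (fun W => linY W.rep) (fun _ => (0, 1))
        (fun _ _ => isBihomogeneous_linY _)
      rw [Finset.sum_const, Prod.smul_mk, smul_eq_mul, smul_eq_mul,
        mul_zero, mul_one] at hx hy
      have h := hx.mul hy
      simpa using h
    · intro hvan
      have h0 := hvan P₁.rep Q₁.rep P₁.rep_nonzero Q₁.rep_nonzero P₁.mk_rep Q₁.mk_rep
      rw [map_mul, map_prod, map_prod] at h0
      rcases mul_eq_zero.mp h0 with h' | h'
      · obtain ⟨P', hP', hP0⟩ := Finset.prod_eq_zero_iff.mp h'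
        rw [eval_linX, det_zero_iff P₁.rep_nonzero P'.rep_nonzero,
          Projectivization.mk_rep, Projectivization.mk_rep] at hP0
        exact hSfP₁ P' hP' hP0.symm
      · obtain ⟨W, hW, hW0⟩ := Finset.prod_eq_zero_iff.mp h'
        rw [eval_linY, det_zero_iff Q₁.rep_nonzero W.rep_nonzero,
          Projectivization.mk_rep, Projectivization.mk_rep] at hW0
        exact hQ₁T (hW0 ▸ Finset.mem_of_mem_erase hW)
    · intro R hR hne p q hp hq hmk1 hmk2
      rw [map_mul, map_prod, map_prod]
      rcases eq_or_ne R.2 Q₂ with h2 | h2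
      · apply mul_eq_zero_of_left
        refine Finset.prod_eq_zero
          (show R.1 ∈ Sf from Finset.mem_image.mpr
            ⟨R, Finset.mem_filter.mpr ⟨hR, h2⟩, rfl⟩) ?_
        rw [eval_linX, det_zero_iff hp R.1.rep_nonzero, Projectivization.mk_rep]
        exact hmk1
      · apply mul_eq_zero_of_right
        refine Finset.prod_eq_zero (Finset.mem_erase.mpr ⟨h2, hmemT R hR hne⟩) ?_
        rw [eval_linY, det_zero_iff hq R.2.rep_nonzero, Projectivization.mk_rep]
        exact hmk2
  have hlow : ∀ s' : ℕ, ((0 : ℕ), s') ∈ sepDegrees X (P₁, Q₁) → T.card ≤ s' := by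
    rintro s' ⟨F, hbih, hnv, hv⟩
    refine card_le_of_binary_form T Q₁ hQ₁T P₁.rep hbih ?_ ?_
    · intro W hW
      obtain ⟨hWQ₁, hWim⟩ := Finset.mem_erase.mp hW
      obtain ⟨R, hRX, hR2⟩ := Finset.mem_image.mp hWim
      have hne : R ≠ (P₁, Q₁) := by
        intro h
        rw [h] at hR2
        exact hWQ₁ hR2.symm
      have h0 := hv R hRX hne R.1.rep W.rep R.1.rep_nonzero W.rep_nonzero
        (Projectivization.mk_rep _) (by rw [Projectivization.mk_rep]; exact hR2.symm)
      calc MvPolynomial.eval (Sum.elim P₁.rep W.rep) F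
          = MvPolynomial.eval (Sum.elim R.1.rep W.rep) F :=
            eval_elim_left_indep hbih _ _ _
        _ = 0 := h0
    · intro h0
      apply hnv
      intro p q hp hq hmk1 hmk2
      obtain ⟨a, haq⟩ : ∃ a : kˣ, a • q = Q₁.rep := by
        rw [← Projectivization.mk_eq_mk_iff k _ _ Q₁.rep_nonzero hq,
          Projectivization.mk_rep]
        exact hmk2.symm
      rw [Units.smul_def] at haq
      have h1 : MvPolynomial.eval (Sum.elim P₁.rep ((a : k) • q)) F
          = (a : k) ^ s' * MvPolynomial.eval (Sum.elim P₁.rep q) F :=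
        eval_elim_smul_right hbih _ _ _
      rw [haq, h0] at h1
      have h2 : MvPolynomial.eval (Sum.elim P₁.rep q) F = 0 := by
        rcases mul_eq_zero.mp h1.symm with h | h
        · exact absurd h (pow_ne_zero _ a.ne_zero)
        · exact h
      rw [eval_elim_left_indep hbih p P₁.rep q]
      exact h2
  obtain ⟨d₁, hd₁S, hd₁le, hd₁min⟩ := exists_minimal_le _ _ hG
  obtain ⟨d₂, hd₂S, hd₂le, hd₂min⟩ := exists_minimal_le _ _ hF
  have hd₁1 : d₁.1 = 0 := Nat.le_zero.mp hd₁le.1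
  have hd₁S' : ((0 : ℕ), d₁.2) ∈ sepDegrees X (P₁, Q₁) := by
    have h := hd₁S
    rwa [show d₁ = (0, d₁.2) from Prod.ext hd₁1 rfl] at h
  have hc1 : T.card ≤ d₁.2 := hlow _ hd₁S'
  have hc2 : d₂.2 ≤ T'.card := hd₂le.2
  have hc3 : T'.card < T.card := Finset.card_erase_lt_of_mem hQ₂T
  refine ⟨d₁, ⟨hd₁S, hd₁min⟩, d₂, ⟨hd₂S, hd₂min⟩, fun h => ?_⟩
  have := congrArg Prod.snd h
  omega
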